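/- Let X be an effective semitransitive distributive binary G-space with at least two points. Then X admits a field structure such that G is isomorphic to the multiplicative group of this field and the binary action is given by g(x,y) = (1−p)x + py, where p is the field element corresponding to g. -/

import Mathlib

def IsBinAct {G X : Type*} [Group G] (a : G → X → X → X) : Prop :=
  (∀ g h x y, a (g * h) x y = a g x (a h x y)) ∧ ∀ x y, a 1 x y = y

def IsDistribAct {G X : Type*} [Group G] (a : G → X → X → X) : Prop :=
  ∀ g h x y z, a g x (a h y z) = a h (a g x y) (a g x z)

def IsEffectiveAct {G X : Type*} [Group G] (a : G → X → X → X) : Prop :=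
  ∀ g, (∀ x y, a g x y = y) → g = 1

def IsSemitransAct {G X : Type*} [Group G] (a : G → X → X → X) : Prop :=
  (∀ g x, a g x x = x) ∧ ∀ x y : X, x ≠ y → Set.range (fun g => a g x y) = {x}ᶜ

/-- A field structure on `X` together with an isomorphism of `G` with `Xˣ` realizing the
binary action as `g(x,y) = (1 - p)x + p y`, where `p` corresponds to `g`. -/
structure FieldActionModel (G X : Type*) [Group G] (a : G → X → X → X) where
  [fieldX : Field X]
  iso : G ≃* Xˣ
  compat : ∀ (g : G) (x y : X), a g x y = (1 - ((iso g : Xˣ) : X)) * x + ((iso g : Xˣ) : X) * y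

namespace SemitransField

open scoped Classical

noncomputable section

structure Ctx (G X : Type*) [Group G] where
  a : G → X → X → X
  hmul : ∀ g h x y, a (g * h) x y = a g x (a h x y)
  hone : ∀ x y, a 1 x y = y
  heff : ∀ g, (∀ x y, a g x y = y) → g = 1
  hdist : ∀ g h x y w, a g x (a h y w) = a h (a g x y) (a g x w)
  hfx : ∀ g x, a g x x = x
  hrange : ∀ x y : X, x ≠ y → Set.range (fun g => a g x y) = {x}ᶜ
  z : X
  o : X
  hzo : z ≠ o
  p0 : X
  hp0z : p0 ≠ z
  hp0o : p0 ≠ o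

variable {G X : Type*} [Group G]

namespace Ctx
variable (S : Ctx G X)

theorem acancel (g : G) (x y : X) : S.a g⁻¹ x (S.a g x y) = y := by
  rw [← S.hmul, inv_mul_cancel, S.hone]

theorem acancel' (g : G) (x y : X) : S.a g x (S.a g⁻¹ x y) = y := by
  rw [← S.hmul, mul_inv_cancel, S.hone]

theorem ainj {g : G} {x y y' : X} (h : S.a g x y = S.a g x y') : y = y' := by
  have h2 := congrArg (S.a g⁻¹ x) h
  rwa [S.acancel, S.acancel] at h2

theorem aeqx {g : G} {x y : X} : S.a g x y = x ↔ y = x := by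
  constructor
  · intro h
    have : S.a g⁻¹ x (S.a g x y) = S.a g⁻¹ x x := by rw [h]
    rwa [S.acancel, S.hfx] at this
  · rintro rfl; exact S.hfx _ _

theorem exists_sol {x y w : X} (hxy : x ≠ y) (hw : w ≠ x) : ∃ g, S.a g x y = w := by
  have hr := S.hrange x y hxy
  have hmem : w ∈ ({x}ᶜ : Set X) := by simpa using hw
  rw [← hr] at hmem
  exact hmem

theorem commBase (g h : G) (x y : X) : S.a g x (S.a h x y) = S.a h x (S.a g x y) := by
  have h2 := S.hdist g h x x y
  rwa [S.hfx] at h2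

theorem stab {k : G} {x y : X} (hxy : x ≠ y) (h : S.a k x y = y) : k = 1 := by
  have stepA : ∀ w, S.a k x w = w := by
    intro w
    by_cases hw : w = x
    · subst hw; exact S.hfx _ _
    · obtain ⟨g, hg⟩ := S.exists_sol hxy hw
      calc S.a k x w = S.a k x (S.a g x y) := by rw [hg]
        _ = S.a g x (S.a k x y) := S.commBase ..
        _ = w := by rw [h, hg]
  apply S.heff
  intro u w
  by_cases hux : u = x
  · subst hux; exact stepA w
  by_cases hwu : w = u
  · subst hwu; exact S.hfx ..
  by_cases hX : ∃ x', x' ≠ x ∧ x' ≠ u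
  · obtain ⟨x', hx'x, hx'u⟩ := hX
    obtain ⟨g, hg⟩ := S.exists_sol hx'x (Ne.symm hx'u)
    have hgv : S.a g x' (S.a g⁻¹ x' w) = w := S.acancel' ..
    calc S.a k u w = S.a k (S.a g x' x) (S.a g x' (S.a g⁻¹ x' w)) := by rw [hg, hgv]
      _ = S.a g x' (S.a k x (S.a g⁻¹ x' w)) := (S.hdist g k x' x _).symm
      _ = S.a g x' (S.a g⁻¹ x' w) := by rw [stepA]
      _ = w := hgv
  · push_neg at hX
    have hwx : w = x := by
      by_cases h1 : w = x
      · exact h1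
      · exact absurd (hX w h1) hwu
    subst hwx
    by_cases h2 : S.a k u w = w
    · exact h2
    · exfalso
      have h3 : S.a k u w = u := hX _ h2
      exact hwu (S.aeqx.mp h3)

theorem labinj {g h : G} {x y : X} (hxy : x ≠ y) (he : S.a g x y = S.a h x y) : g = h := by
  have h1 : S.a (h⁻¹ * g) x y = y := by
    rw [S.hmul, he, ← S.hmul, inv_mul_cancel, S.hone]
  have h2 := S.stab hxy h1
  exact (inv_mul_eq_one.mp h2).symm

/-- The label of a point: the unique `g` with `a g z o = p` (junk `1` at `z`). -/
def lab (p : X) : G := if h : p = S.z then 1 else (S.exists_sol S.hzo h).choose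

theorem lab_spec {p : X} (h : p ≠ S.z) : S.a (S.lab p) S.z S.o = p := by
  rw [lab, dif_neg h]
  exact (S.exists_sol S.hzo h).choose_spec

def pg (g : G) : X := S.a g S.z S.o

theorem pg_ne_z (g : G) : S.pg g ≠ S.z := fun h => S.hzo (S.aeqx.mp h).symm

theorem pg_one : S.pg 1 = S.o := S.hone ..

theorem lab_pg (g : G) : S.lab (S.pg g) = g :=
  S.labinj S.hzo (S.lab_spec (S.pg_ne_z g))

theorem lab_o : S.lab S.o = 1 := by
  have := S.lab_pg 1
  rwa [pg_one] at this

theorem pg_eq_o {g : G} (h : S.pg g = S.o) : g = 1 := S.stab S.hzo h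

/-- Multiplication. -/
def m (p q : X) : X := if p = S.z then S.z else S.a (S.lab p) S.z q

theorem m_def {p : X} (h : p ≠ S.z) (q : X) : S.m p q = S.a (S.lab p) S.z q := if_neg h

theorem m_zl (q : X) : S.m S.z q = S.z := if_pos rfl

theorem m_zr (p : X) : S.m p S.z = S.z := by
  by_cases h : p = S.z
  · subst h; exact S.m_zl _
  · rw [S.m_def h]; exact S.hfx ..

theorem m_ol (q : X) : S.m S.o q = q := by
  rw [S.m_def (Ne.symm S.hzo), S.lab_o, S.hone]

theorem m_or (p : X) : S.m p S.o = p := by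
  by_cases h : p = S.z
  · subst h; exact S.m_zl _
  · rw [S.m_def h]; exact S.lab_spec h

theorem m_pg (g : G) (q : X) : S.m (S.pg g) q = S.a g S.z q := by
  rw [S.m_def (S.pg_ne_z g), S.lab_pg]

theorem m_ne {p q : X} (hp : p ≠ S.z) (hq : q ≠ S.z) : S.m p q ≠ S.z := by
  rw [S.m_def hp]
  exact fun h => hq (S.aeqx.mp h)

theorem pg_mul (g h : G) : S.pg (g * h) = S.m (S.pg g) (S.pg h) := by
  rw [S.m_pg]; exact S.hmul ..

theorem m_assoc (p q r : X) : S.m (S.m p q) r = S.m p (S.m q r) := by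
  by_cases hp : p = S.z
  · subst hp; simp only [S.m_zl]
  by_cases hq : q = S.z
  · subst hq; simp only [S.m_zl, S.m_zr]
  have h1 : S.m p q = S.pg (S.lab p * S.lab q) := by
    rw [S.m_def hp, pg, S.hmul]
    congr 1
    exact (S.lab_spec hq).symm
  rw [h1, S.m_pg, S.hmul, ← S.m_def hp, ← S.m_def hq]

theorem m_comm (p q : X) : S.m p q = S.m q p := by
  by_cases hp : p = S.z
  · subst hp; simp only [S.m_zl, S.m_zr]
  by_cases hq : q = S.z
  · subst hq; simp only [S.m_zl, S.m_zr]
  rw [S.m_def hp, S.m_def hq]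
  calc S.a (S.lab p) S.z q = S.a (S.lab p) S.z (S.a (S.lab q) S.z S.o) := by rw [S.lab_spec hq]
    _ = S.a (S.lab q) S.z (S.a (S.lab p) S.z S.o) := S.commBase ..
    _ = S.a (S.lab q) S.z p := by rw [S.lab_spec hp]

theorem m_left_comm (p q r : X) : S.m p (S.m q r) = S.m q (S.m p r) := by
  rw [← S.m_assoc, S.m_comm p q, S.m_assoc]

theorem m_cancel {p q r : X} (hp : p ≠ S.z) (h : S.m p q = S.m p r) : q = r := by
  rw [S.m_def hp, S.m_def hp] at h
  exact S.ainj h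

/-- Multiplicative inverse (junk `z` at `z`). -/
def pinv (p : X) : X := if p = S.z then S.z else S.a (S.lab p)⁻¹ S.z S.o

theorem pinv_z : S.pinv S.z = S.z := if_pos rfl

theorem pinv_def {p : X} (h : p ≠ S.z) : S.pinv p = S.a (S.lab p)⁻¹ S.z S.o := if_neg h

theorem pinv_ne {p : X} (h : p ≠ S.z) : S.pinv p ≠ S.z := by
  rw [S.pinv_def h]
  exact fun hh => S.hzo (S.aeqx.mp hh).symm

theorem m_pinv {p : X} (h : p ≠ S.z) : S.m p (S.pinv p) = S.o := by
  rw [S.m_def h, S.pinv_def h, ← S.hmul, mul_inv_cancel, S.hone]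

theorem inv_unique {p q : X} (hp : p ≠ S.z) (h : S.m p q = S.o) : q = S.pinv p :=
  S.m_cancel hp (h.trans (S.m_pinv hp).symm)

theorem pinv_o : S.pinv S.o = S.o := by
  rw [S.pinv_def (Ne.symm S.hzo), S.lab_o, inv_one, S.hone]

theorem pinv_pinv {p : X} (h : p ≠ S.z) : S.pinv (S.pinv p) = p :=
  (S.inv_unique (S.pinv_ne h) (by rw [S.m_comm, S.m_pinv h])).symm

theorem pinv_ne_o {p : X} (h : p ≠ S.o) : S.pinv p ≠ S.o := by
  by_cases hz : p = S.z
  · subst hz; rw [S.pinv_z]; exact S.hzo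
  · intro hh
    apply h
    rw [← S.pinv_pinv hz, hh, S.pinv_o]

theorem pinv_inj {p q : X} (hp : p ≠ S.z) (hq : q ≠ S.z) (h : S.pinv p = S.pinv q) : p = q := by
  rw [← S.pinv_pinv hp, h, S.pinv_pinv hq]

theorem pinv_hom (p q : X) : S.pinv (S.m p q) = S.m (S.pinv p) (S.pinv q) := by
  by_cases hp : p = S.z
  · subst hp; simp only [S.m_zl, S.pinv_z]
  by_cases hq : q = S.z
  · subst hq; simp only [S.m_zl, S.m_zr, S.pinv_z]
  symm
  apply S.inv_unique (S.m_ne hp hq)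
  calc S.m (S.m p q) (S.m (S.pinv p) (S.pinv q))
      = S.m (S.m p (S.pinv p)) (S.m q (S.pinv q)) := by
        simp only [S.m_assoc, S.m_left_comm, S.m_comm]
    _ = S.o := by rw [S.m_pinv hp, S.m_pinv hq, S.m_ol]

theorem pg_inv (g : G) : S.pg g⁻¹ = S.pinv (S.pg g) := by
  apply S.inv_unique (S.pg_ne_z g)
  rw [← S.pg_mul, mul_inv_cancel, pg_one]

theorem lab_pinv {p : X} (h : p ≠ S.z) : S.lab (S.pinv p) = (S.lab p)⁻¹ := by
  rw [S.pinv_def h]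
  exact S.lab_pg _

theorem m_pinv_def {p : X} (h : p ≠ S.z) (y : X) :
    S.m (S.pinv p) y = S.a (S.lab p)⁻¹ S.z y := by
  rw [S.m_def (S.pinv_ne h), S.lab_pinv h]


/-- The canonical involution swapping `z` and `o`. -/
def jgk : G := (S.exists_sol S.hp0z (Ne.symm S.hp0o)).choose

theorem jgk_spec : S.a S.jgk S.p0 S.z = S.o := (S.exists_sol S.hp0z (Ne.symm S.hp0o)).choose_spec

theorem jv_ne_o : S.a S.jgk S.p0 S.o ≠ S.o := by
  intro h
  have h2 : S.a S.jgk S.p0 S.o = S.a S.jgk S.p0 S.z := by rw [h, S.jgk_spec]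
  exact S.hzo (S.ainj h2).symm

def jgl : G := (S.exists_sol (x := S.o) (Ne.symm S.jv_ne_o) S.hzo).choose

theorem jgl_spec : S.a S.jgl S.o (S.a S.jgk S.p0 S.o) = S.z :=
  (S.exists_sol (x := S.o) (Ne.symm S.jv_ne_o) S.hzo).choose_spec

def J (y : X) : X := S.a S.jgl S.o (S.a S.jgk S.p0 y)

theorem J_z : S.J S.z = S.o := by
  rw [J, S.jgk_spec]; exact S.hfx _ _

theorem J_o : S.J S.o = S.z := S.jgl_spec

theorem J_conj (h : G) (u v : X) : S.J (S.a h u v) = S.a h (S.J u) (S.J v) := by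
  show S.a S.jgl S.o (S.a S.jgk S.p0 (S.a h u v)) = _
  rw [S.hdist S.jgk h S.p0 u v, S.hdist S.jgl h S.o (S.a S.jgk S.p0 u) (S.a S.jgk S.p0 v)]
  rfl

theorem twofix {F : X → X} (hF : ∀ h u v, F (S.a h u v) = S.a h (F u) (F v))
    {u v : X} (huv : u ≠ v) (hu : F u = u) (hv : F v = v) : ∀ y, F y = y := by
  intro y
  by_cases hy : y = u
  · subst hy; exact hu
  · obtain ⟨g, hg⟩ := S.exists_sol huv hy
    rw [← hg, hF, hu, hv]

theorem JJ (y : X) : S.J (S.J y) = y := by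
  apply S.twofix (F := fun y => S.J (S.J y)) ?_ S.hzo ?_ ?_
  · intro h u v; rw [S.J_conj, S.J_conj]
  · rw [S.J_z, S.J_o]
  · rw [S.J_o, S.J_z]

theorem J_inj {u v : X} (h : S.J u = S.J v) : u = v := by
  have h2 := congrArg S.J h; rwa [S.JJ, S.JJ] at h2

theorem J_ne_z {p : X} (h : p ≠ S.o) : S.J p ≠ S.z := by
  intro hh
  exact h (by rw [← S.JJ p, hh, S.J_z])

theorem J_ne_o {p : X} (h : p ≠ S.z) : S.J p ≠ S.o := by
  intro hh
  exact h (by rw [← S.JJ p, hh, S.J_o])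

theorem m_conj {c : X} (hc : c ≠ S.z) (h : G) (u v : X) :
    S.m c (S.a h u v) = S.a h (S.m c u) (S.m c v) := by
  rw [S.m_def hc, S.m_def hc, S.m_def hc]
  exact S.hdist _ h S.z u v

theorem BJ (g : G) (y : X) : S.a g S.o y = S.J (S.m (S.pg g) (S.J y)) := by
  rw [S.m_pg]
  rw [S.J_conj, S.J_z, S.JJ]

theorem nJ (g : G) : S.a g S.o S.z = S.J (S.pg g) := by
  rw [S.BJ, S.J_z, S.m_or]

theorem I3 {x : X} (hx : x ≠ S.z) (g : G) (y : X) :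
    S.a g x y = S.m x (S.a g S.o (S.m (S.pinv x) y)) := by
  symm
  rw [S.m_def hx, S.m_pinv_def hx, S.hdist, S.acancel', S.lab_spec hx]

theorem conj_fix_z {F : X → X} (hF : ∀ h u v, F (S.a h u v) = S.a h (F u) (F v))
    (hz : F S.z = S.z) (hw : F S.o ≠ S.z) : ∀ y, F y = S.m (F S.o) y := by
  have hlab : S.a (S.lab (F S.o)) S.z S.o = F S.o := S.lab_spec hw
  have key : ∀ y, S.a (S.lab (F S.o))⁻¹ S.z (F y) = y := by
    apply S.twofix (F := fun y => S.a (S.lab (F S.o))⁻¹ S.z (F y)) ?_ S.hzo ?_ ?_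
    · intro h u v; rw [hF, S.hdist]
    · rw [hz, S.hfx]
    · have h5 := S.acancel (S.lab (F S.o)) S.z S.o
      rw [hlab] at h5
      exact h5
  intro y
  have h2 := congrArg (S.a (S.lab (F S.o)) S.z) (key y)
  rw [S.acancel'] at h2
  rw [S.m_def hw]
  exact h2

theorem pearl {p : X} (hp1 : p ≠ S.z) (hp2 : p ≠ S.o) (y : X) :
    S.J (S.m (S.pinv p) (S.J (S.m (S.J p) (S.J y)))) = S.m (S.J (S.pinv p)) y := by
  have hp' : S.pinv p ≠ S.z := S.pinv_ne hp1
  have hJp : S.J p ≠ S.z := S.J_ne_z hp2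
  have hF : ∀ h u v, S.J (S.m (S.pinv p) (S.J (S.m (S.J p) (S.J (S.a h u v)))))
      = S.a h (S.J (S.m (S.pinv p) (S.J (S.m (S.J p) (S.J u)))))
          (S.J (S.m (S.pinv p) (S.J (S.m (S.J p) (S.J v))))) := by
    intro h u v
    rw [S.J_conj, S.m_conj hJp, S.J_conj, S.m_conj hp', S.J_conj]
  have hFz : S.J (S.m (S.pinv p) (S.J (S.m (S.J p) (S.J S.z)))) = S.z := by
    rw [S.J_z, S.m_or, S.JJ, S.m_comm, S.m_pinv hp1, S.J_o]
  have hFo : S.J (S.m (S.pinv p) (S.J (S.m (S.J p) (S.J S.o)))) = S.J (S.pinv p) := by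
    rw [S.J_o, S.m_zr, S.J_z, S.m_or]
  have hne : S.J (S.m (S.pinv p) (S.J (S.m (S.J p) (S.J S.o)))) ≠ S.z := by
    rw [hFo]; exact S.J_ne_z (S.pinv_ne_o hp2)
  have h2 := S.conj_fix_z (F := fun y => S.J (S.m (S.pinv p) (S.J (S.m (S.J p) (S.J y)))))
    hF hFz hne y
  rwa [hFo] at h2

theorem id1 {p : X} (hp1 : p ≠ S.z) (hp2 : p ≠ S.o) :
    S.J (S.pinv (S.J p)) = S.pinv (S.J (S.pinv p)) := by
  have h := S.pearl hp1 hp2 (S.J (S.pinv (S.J p)))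
  rw [S.JJ, S.m_pinv (S.J_ne_z hp2), S.J_o, S.m_zr, S.J_z] at h
  exact S.inv_unique (S.J_ne_z (S.pinv_ne_o hp2)) h.symm

theorem expand {b : X} (hb1 : b ≠ S.z) (hb2 : b ≠ S.o) (u : X) :
    S.J (S.m b u) = S.m (S.J b) (S.J (S.m (S.pinv (S.J (S.pinv b))) (S.J u))) := by
  have h := S.pearl (S.J_ne_z hb2) (S.J_ne_o hb1) (S.J u)
  rw [S.JJ, S.JJ] at h
  have h2 := congrArg S.J h
  rw [S.JJ] at h2
  have h3 := congrArg (S.m (S.J b)) h2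
  rw [← S.m_assoc, S.m_pinv (S.J_ne_z hb2), S.m_ol] at h3
  rw [h3, S.id1 hb1 hb2]

/-- The negation-candidate function. -/
def k (p : X) : X := S.m (S.J p) (S.pinv (S.J (S.pinv p)))

theorem k_def (p : X) : S.k p = S.m (S.J p) (S.pinv (S.J (S.pinv p))) := rfl

theorem k_ne_z {p : X} (hp2 : p ≠ S.o) : S.k p ≠ S.z :=
  S.m_ne (S.J_ne_z hp2) (S.pinv_ne (S.J_ne_z (S.pinv_ne_o hp2)))

theorem k_pinv_eq {p : X} (hp1 : p ≠ S.z) :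
    S.k (S.pinv p) = S.m (S.J (S.pinv p)) (S.pinv (S.J p)) := by
  rw [k_def, S.pinv_pinv hp1]

theorem k_mul_k_pinv {p : X} (hp1 : p ≠ S.z) (hp2 : p ≠ S.o) :
    S.m (S.k p) (S.k (S.pinv p)) = S.o := by
  rw [S.k_def, S.k_pinv_eq hp1]
  calc S.m (S.m (S.J p) (S.pinv (S.J (S.pinv p)))) (S.m (S.J (S.pinv p)) (S.pinv (S.J p)))
      = S.m (S.m (S.J p) (S.pinv (S.J p))) (S.m (S.J (S.pinv p)) (S.pinv (S.J (S.pinv p)))) := by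
        simp only [S.m_assoc, S.m_left_comm, S.m_comm]
    _ = S.o := by
        rw [S.m_pinv (S.J_ne_z hp2), S.m_pinv (S.J_ne_z (S.pinv_ne_o hp2)), S.m_ol]

theorem pinv_k {p : X} (hp1 : p ≠ S.z) (hp2 : p ≠ S.o) :
    S.pinv (S.k p) = S.k (S.pinv p) :=
  (S.inv_unique (S.k_ne_z hp2) (S.k_mul_k_pinv hp1 hp2)).symm

theorem nl2 {u v : X} (hu1 : u ≠ S.z) (hu2 : u ≠ S.o) (hv1 : v ≠ S.z) (hv2 : v ≠ S.o) :
    S.J (S.m (S.J u) (S.pinv (S.J (S.pinv v))))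
      = S.m u (S.J (S.m (S.J (S.pinv u)) (S.pinv (S.J v)))) := by
  have h := S.expand (S.J_ne_z hu2) (S.J_ne_o hu1) (S.pinv (S.J (S.pinv v)))
  rw [S.JJ] at h
  rw [S.id1 hu1 hu2, S.pinv_pinv (S.J_ne_z (S.pinv_ne_o hu2))] at h
  rw [S.id1 (S.pinv_ne hv1) (S.pinv_ne_o hv2), S.pinv_pinv hv1] at h
  exact h

theorem keyJK {p : X} (hp1 : p ≠ S.z) (hp2 : p ≠ S.o) :
    S.J (S.k p) = S.m p (S.J (S.k (S.pinv p))) := by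
  rw [S.k_def, S.k_pinv_eq hp1]
  exact S.nl2 hp1 hp2 hp1 hp2

theorem neglin {u v : X} (hu1 : u ≠ S.z) (hu2 : u ≠ S.o) (hv1 : v ≠ S.z) (hv2 : v ≠ S.o)
    (huv : S.m u v ≠ S.o) : S.k (S.m u v) = S.m u (S.k v) := by
  have hA : S.J (S.m u v)
      = S.m (S.J v) (S.J (S.m (S.pinv (S.J (S.pinv v))) (S.J u))) := by
    rw [S.m_comm u v]; exact S.expand hv1 hv2 u
  have hB : S.J (S.pinv (S.m u v))
      = S.m (S.J (S.pinv v)) (S.J (S.m (S.pinv (S.J v)) (S.J (S.pinv u)))) := by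
    rw [S.pinv_hom, S.m_comm]
    have h := S.expand (S.pinv_ne hv1) (S.pinv_ne_o hv2) (S.pinv u)
    rwa [S.pinv_pinv hv1] at h
  have hBo : S.m (S.pinv (S.J v)) (S.J (S.pinv u)) ≠ S.o := by
    intro h
    have h1 : S.J (S.pinv u) = S.J v := by
      have h2 := S.inv_unique (S.pinv_ne (S.J_ne_z hv2)) h
      rwa [S.pinv_pinv (S.J_ne_z hv2)] at h2
    have h3 : S.pinv u = v := S.J_inj h1
    exact huv (by rw [← h3, S.m_pinv hu1])
  have hNL2 : S.J (S.m (S.pinv (S.J (S.pinv v))) (S.J u))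
      = S.m u (S.J (S.m (S.pinv (S.J v)) (S.J (S.pinv u)))) := by
    have h := S.nl2 hu1 hu2 hv1 hv2
    rw [S.m_comm (S.J u), S.m_comm (S.J (S.pinv u))] at h
    exact h
  have hJB : S.J (S.m (S.pinv (S.J v)) (S.J (S.pinv u))) ≠ S.z := S.J_ne_z hBo
  rw [S.k_def, hA, hB, hNL2]
  calc S.m (S.m (S.J v) (S.m u (S.J (S.m (S.pinv (S.J v)) (S.J (S.pinv u))))))
        (S.pinv (S.m (S.J (S.pinv v)) (S.J (S.m (S.pinv (S.J v)) (S.J (S.pinv u))))))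
      = S.m (S.m u (S.m (S.J v) (S.pinv (S.J (S.pinv v)))))
          (S.m (S.J (S.m (S.pinv (S.J v)) (S.J (S.pinv u))))
            (S.pinv (S.J (S.m (S.pinv (S.J v)) (S.J (S.pinv u)))))) := by
        rw [S.pinv_hom]
        simp only [S.m_assoc, S.m_left_comm, S.m_comm]
    _ = S.m u (S.k v) := by
        rw [S.m_pinv hJB, S.m_or, S.k_def]

/-- "-1" -/
def mu : X := S.m (S.k S.p0) (S.pinv S.p0)

theorem mu_ne : S.mu ≠ S.z := S.m_ne (S.k_ne_z S.hp0o) (S.pinv_ne S.hp0z)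

theorem kmu {t : X} (ht : t ≠ S.z) (hto : t ≠ S.o) : S.k t = S.m S.mu t := by
  by_cases h : t = S.p0
  · rw [h, mu, S.m_assoc, S.m_comm (S.pinv S.p0), S.m_pinv S.hp0z, S.m_or]
  · have hu1 : S.m t (S.pinv S.p0) ≠ S.z := S.m_ne ht (S.pinv_ne S.hp0z)
    have hu2 : S.m t (S.pinv S.p0) ≠ S.o := by
      intro hh
      apply h
      have h2 := S.inv_unique ht hh
      rw [← S.pinv_pinv S.hp0z, h2, S.pinv_pinv ht]
    have heq : S.m (S.m t (S.pinv S.p0)) S.p0 = t := by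
      rw [S.m_assoc, S.m_comm (S.pinv S.p0), S.m_pinv S.hp0z, S.m_or]
    have h3 := S.neglin hu1 hu2 S.hp0z S.hp0o (by rw [heq]; exact hto)
    rw [heq] at h3
    rw [h3, mu]
    simp only [S.m_assoc, S.m_left_comm, S.m_comm]

theorem pinv_mu : S.pinv S.mu = S.mu := by
  by_cases hk : S.k S.p0 = S.o
  · have h1 : S.pinv (S.J (S.pinv S.p0)) = S.pinv (S.J S.p0) := by
      have hk' : S.m (S.J S.p0) (S.pinv (S.J (S.pinv S.p0))) = S.o := by
        rw [← S.k_def]; exact hk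
      exact S.inv_unique (S.J_ne_z S.hp0o) hk'
    have h2 : S.pinv S.p0 = S.p0 :=
      S.J_inj (S.pinv_inj (S.J_ne_z (S.pinv_ne_o S.hp0o)) (S.J_ne_z S.hp0o) h1)
    have hmu : S.mu = S.p0 := by rw [mu, hk, S.m_ol, h2]
    rw [hmu]
    conv_lhs => rw [← h2]
    rw [S.pinv_pinv S.hp0z]
  · have hkz : S.k S.p0 ≠ S.z := S.k_ne_z S.hp0o
    have hkpo : S.k (S.pinv S.p0) ≠ S.o := by
      intro hh
      apply hk
      have h4 := S.pinv_k S.hp0z S.hp0o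
      rw [hh] at h4
      rw [← S.pinv_pinv hkz, h4, S.pinv_o]
    have kk : S.k (S.k S.p0) = S.p0 := by
      rw [S.k_def (S.k S.p0), S.pinv_k S.hp0z S.hp0o, S.keyJK S.hp0z S.hp0o]
      rw [S.m_assoc, S.m_pinv (S.J_ne_z hkpo), S.m_or]
    have h1 := S.kmu (ht := hkz) hk
    have h2 := S.kmu S.hp0z S.hp0o
    have h3 : S.m (S.m S.mu S.mu) S.p0 = S.p0 := by
      conv_rhs => rw [← kk]
      rw [h1, h2, S.m_assoc]
    have h4 : S.m S.p0 (S.m S.mu S.mu) = S.m S.p0 S.o := by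
      rw [S.m_or]
      conv_rhs => rw [← h3]
      rw [S.m_comm]
    have h5 := S.m_cancel S.hp0z h4
    exact (S.inv_unique S.mu_ne h5).symm

theorem mu_sq : S.m S.mu S.mu = S.o := by
  have h := S.pinv_mu
  calc S.m S.mu S.mu = S.m S.mu (S.pinv S.mu) := by rw [h]
    _ = S.o := S.m_pinv S.mu_ne

theorem jkt {t : X} (ht : t ≠ S.z) : S.J (S.m S.mu t) = S.m t (S.J (S.m S.mu (S.pinv t))) := by
  by_cases hto : t = S.o
  · subst hto
    rw [S.pinv_o, S.m_ol]
  · rw [← S.kmu ht hto, ← S.kmu (S.pinv_ne ht) (S.pinv_ne_o hto)]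
    exact S.keyJK ht hto

/-! ### Addition -/

def T (x y : X) : X := if x = S.z then y else S.m x (S.J (S.m S.mu (S.m (S.pinv x) y)))

theorem T_zl (y : X) : S.T S.z y = y := if_pos rfl

theorem T_def {x : X} (hx : x ≠ S.z) (y : X) :
    S.T x y = S.m x (S.J (S.m S.mu (S.m (S.pinv x) y))) := if_neg hx

theorem T_zr (x : X) : S.T x S.z = x := by
  by_cases hx : x = S.z
  · rw [hx, S.T_zl]
  · rw [S.T_def hx, S.m_zr, S.m_zr, S.J_z, S.m_or]

theorem T_o (y : X) : S.T S.o y = S.J (S.m S.mu y) := by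
  rw [S.T_def (Ne.symm S.hzo), S.pinv_o, S.m_ol, S.m_ol]

theorem tneg (x : X) : S.T x (S.m S.mu x) = S.z := by
  by_cases hx : x = S.z
  · rw [hx, S.T_zl, S.m_zr]
  · rw [S.T_def hx]
    have h1 : S.m S.mu (S.m (S.pinv x) (S.m S.mu x)) = S.o := by
      calc S.m S.mu (S.m (S.pinv x) (S.m S.mu x))
          = S.m (S.m S.mu S.mu) (S.m x (S.pinv x)) := by
            simp only [S.m_assoc, S.m_left_comm, S.m_comm]
        _ = S.o := by rw [S.mu_sq, S.m_pinv hx, S.m_ol]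
    rw [h1, S.J_o, S.m_zr]

theorem tcomm (x y : X) : S.T x y = S.T y x := by
  by_cases hx : x = S.z
  · rw [hx, S.T_zl, S.T_zr]
  by_cases hy : y = S.z
  · rw [hy, S.T_zl, S.T_zr]
  rw [S.T_def hx, S.T_def hy]
  have ht : S.m (S.pinv x) y ≠ S.z := S.m_ne (S.pinv_ne hx) hy
  have h2 : S.m (S.pinv y) x = S.pinv (S.m (S.pinv x) y) := by
    rw [S.pinv_hom, S.pinv_pinv hx, S.m_comm]
  rw [h2, S.jkt ht]
  have h3 : S.m x (S.m (S.pinv x) y) = y := by rw [← S.m_assoc, S.m_pinv hx, S.m_ol]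
  rw [← S.m_assoc, h3]

theorem tassoc (x y w : X) : S.T x (S.T y w) = S.T (S.T x y) w := by
  by_cases hx : x = S.z
  · rw [hx, S.T_zl, S.T_zl]
  by_cases hy : y = S.z
  · rw [hy, S.T_zl, S.T_zr]
  have hx' : S.pinv x ≠ S.z := S.pinv_ne hx
  have ht : S.m (S.pinv x) y ≠ S.z := S.m_ne hx' hy
  have hez : S.m S.mu (S.m (S.pinv x) y) ≠ S.z := S.m_ne S.mu_ne ht
  by_cases heo : S.m S.mu (S.m (S.pinv x) y) = S.o
  · have hy' : y = S.m x S.mu := by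
      have h1 : S.m (S.pinv x) y = S.pinv S.mu := S.inv_unique S.mu_ne heo
      rw [S.pinv_mu] at h1
      have h2 := congrArg (S.m x) h1
      rwa [← S.m_assoc, S.m_pinv hx, S.m_ol] at h2
    have hTxy : S.T x y = S.z := by rw [S.T_def hx, heo, S.J_o, S.m_zr]
    rw [hTxy, S.T_zl]
    rw [S.T_def hy, S.T_def hx]
    have hpy : S.pinv y = S.m (S.pinv x) S.mu := by rw [hy', S.pinv_hom, S.pinv_mu]
    have hin : S.m S.mu (S.m (S.pinv y) w) = S.m (S.pinv x) w := by
      rw [hpy]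
      calc S.m S.mu (S.m (S.m (S.pinv x) S.mu) w)
          = S.m (S.m S.mu S.mu) (S.m (S.pinv x) w) := by
            simp only [S.m_assoc, S.m_left_comm, S.m_comm]
        _ = S.m (S.pinv x) w := by rw [S.mu_sq, S.m_ol]
    rw [hin]
    have hin2 : S.m S.mu (S.m (S.pinv x) (S.m y (S.J (S.m (S.pinv x) w))))
        = S.J (S.m (S.pinv x) w) := by
      rw [hy']
      calc S.m S.mu (S.m (S.pinv x) (S.m (S.m x S.mu) (S.J (S.m (S.pinv x) w))))
          = S.m (S.m S.mu S.mu) (S.m (S.m (S.pinv x) x) (S.J (S.m (S.pinv x) w))) := by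
            simp only [S.m_assoc, S.m_left_comm, S.m_comm]
        _ = S.J (S.m (S.pinv x) w) := by
            rw [S.mu_sq, S.m_comm (S.pinv x) x, S.m_pinv hx, S.m_ol, S.m_ol]
    rw [hin2, S.JJ, ← S.m_assoc, S.m_pinv hx, S.m_ol]
  · have hJe : S.J (S.m S.mu (S.m (S.pinv x) y)) ≠ S.z := S.J_ne_z heo
    have hTxy : S.T x y = S.m x (S.J (S.m S.mu (S.m (S.pinv x) y))) := S.T_def hx y
    have hs : S.m x (S.J (S.m S.mu (S.m (S.pinv x) y))) ≠ S.z := S.m_ne hx hJe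
    rw [hTxy, S.T_def hs, S.T_def hy, S.T_def hx]
    have hL : S.m S.mu (S.m (S.pinv x) (S.m y (S.J (S.m S.mu (S.m (S.pinv y) w)))))
        = S.m (S.m S.mu (S.m (S.pinv x) y)) (S.J (S.m S.mu (S.m (S.pinv y) w))) := by
      simp only [S.m_assoc, S.m_left_comm, S.m_comm]
    rw [hL]
    rw [S.expand hez heo (S.J (S.m S.mu (S.m (S.pinv y) w))), S.JJ]
    have hCA : S.m x (S.J (S.m S.mu (S.m (S.pinv x) y)))
        = S.m y (S.J (S.pinv (S.m S.mu (S.m (S.pinv x) y)))) := by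
      have hpe : S.pinv (S.m S.mu (S.m (S.pinv x) y))
          = S.m S.mu (S.pinv (S.m (S.pinv x) y)) := by
        rw [S.pinv_hom, S.pinv_mu]
      rw [hpe, S.jkt ht, ← S.m_assoc]
      have h3 : S.m x (S.m (S.pinv x) y) = y := by rw [← S.m_assoc, S.m_pinv hx, S.m_ol]
      rw [h3]
    have hW1 : S.m (S.pinv y) (S.pinv (S.J (S.pinv (S.m S.mu (S.m (S.pinv x) y)))))
        = S.m (S.pinv x) (S.pinv (S.J (S.m S.mu (S.m (S.pinv x) y)))) := by
      have h4 := congrArg S.pinv hCA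
      rw [S.pinv_hom, S.pinv_hom] at h4
      exact h4.symm
    have hIN : S.m (S.pinv (S.J (S.pinv (S.m S.mu (S.m (S.pinv x) y)))))
          (S.m S.mu (S.m (S.pinv y) w))
        = S.m S.mu (S.m (S.pinv (S.m x (S.J (S.m S.mu (S.m (S.pinv x) y))))) w) := by
      rw [S.pinv_hom x]
      calc S.m (S.pinv (S.J (S.pinv (S.m S.mu (S.m (S.pinv x) y)))))
            (S.m S.mu (S.m (S.pinv y) w))
          = S.m S.mu (S.m (S.m (S.pinv y)
              (S.pinv (S.J (S.pinv (S.m S.mu (S.m (S.pinv x) y)))))) w) := by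
            simp only [S.m_assoc, S.m_left_comm, S.m_comm]
        _ = S.m S.mu (S.m (S.m (S.pinv x)
              (S.pinv (S.J (S.m S.mu (S.m (S.pinv x) y))))) w) := by
            rw [hW1]
    rw [hIN, S.m_assoc]

theorem tdistrib (r x y : X) : S.m r (S.T x y) = S.T (S.m r x) (S.m r y) := by
  by_cases hr : r = S.z
  · rw [hr, S.m_zl, S.m_zl, S.m_zl, S.T_zl]
  by_cases hx : x = S.z
  · rw [hx, S.T_zl, S.m_zr, S.T_zl]
  have hrx : S.m r x ≠ S.z := S.m_ne hr hx
  rw [S.T_def hx, S.T_def hrx]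
  have h1 : S.m (S.pinv (S.m r x)) (S.m r y) = S.m (S.pinv x) y := by
    rw [S.pinv_hom]
    calc S.m (S.m (S.pinv r) (S.pinv x)) (S.m r y)
        = S.m (S.m r (S.pinv r)) (S.m (S.pinv x) y) := by
          simp only [S.m_assoc, S.m_left_comm, S.m_comm]
      _ = S.m (S.pinv x) y := by rw [S.m_pinv hr, S.m_ol]
  rw [h1, S.m_assoc]

/-! ### The field structure -/

theorem tneg' (x : X) : S.T (S.m S.mu x) x = S.z := by
  rw [S.tcomm]; exact S.tneg x

theorem tdistrib' (x y r : X) : S.m (S.T x y) r = S.T (S.m x r) (S.m y r) := by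
  rw [S.m_comm, S.tdistrib r x y, S.m_comm r x, S.m_comm r y]

def nsm (x : X) : Nat → X
  | 0 => S.z
  | n + 1 => S.T (nsm x n) x

def zsm (x : X) : Int → X
  | Int.ofNat n => S.nsm x n
  | Int.negSucc n => S.m S.mu (S.nsm x (n + 1))

def addCommGroup : AddCommGroup X where
  add := S.T
  add_assoc := fun x y w => (S.tassoc x y w).symm
  zero := S.z
  zero_add := S.T_zl
  add_zero := S.T_zr
  nsmul := fun n x => S.nsm x n
  nsmul_zero := fun x => by show S.nsm x 0 = S.z; rfl
  nsmul_succ := fun n x => by show S.nsm x (n + 1) = S.T (S.nsm x n) x; rfl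
  zsmul := fun i x => S.zsm x i
  zsmul_zero' := fun x => by show S.zsm x 0 = S.z; rfl
  zsmul_succ' := fun n x => by
    show S.zsm x (Int.ofNat (n + 1)) = S.T (S.zsm x (Int.ofNat n)) x; rfl
  zsmul_neg' := fun n x => by
    show S.zsm x (Int.negSucc n) = S.m S.mu (S.zsm x (Int.ofNat (n + 1))); rfl
  neg := fun x => S.m S.mu x
  neg_add_cancel := S.tneg'
  add_comm := S.tcomm

def commRing : CommRing X where
  __ := S.addCommGroup
  mul := S.m
  mul_assoc := S.m_assoc
  one := S.o
  one_mul := S.m_ol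
  mul_one := S.m_or
  left_distrib := S.tdistrib
  right_distrib := S.tdistrib'
  zero_mul := S.m_zl
  mul_zero := S.m_zr
  mul_comm := S.m_comm

def field : Field X where
  __ := S.commRing
  inv := S.pinv
  exists_pair_ne := ⟨S.z, S.o, S.hzo⟩
  mul_inv_cancel := fun x hx => S.m_pinv hx
  inv_zero := S.pinv_z
  nnqsmul := _
  qsmul := _

theorem T_o_mu (p : X) : S.T S.o (S.m S.mu p) = S.J p := by
  rw [S.T_o, ← S.m_assoc, S.mu_sq, S.m_ol]

theorem coeff_id {p : X} (hp1 : p ≠ S.z) (hp2 : p ≠ S.o) :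
    S.pinv (S.J (S.pinv p)) = S.m S.mu (S.m p (S.pinv (S.J p))) := by
  have hk := S.kmu (S.pinv_ne hp1) (S.pinv_ne_o hp2)
  rw [S.k_pinv_eq hp1] at hk
  symm
  apply S.inv_unique (S.J_ne_z (S.pinv_ne_o hp2))
  calc S.m (S.J (S.pinv p)) (S.m S.mu (S.m p (S.pinv (S.J p))))
      = S.m p (S.m (S.m (S.J (S.pinv p)) (S.pinv (S.J p))) S.mu) := by
        simp only [S.m_assoc, S.m_left_comm, S.m_comm]
    _ = S.m p (S.m (S.m S.mu (S.pinv p)) S.mu) := by rw [hk]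
    _ = S.m (S.m p (S.pinv p)) (S.m S.mu S.mu) := by
        simp only [S.m_assoc, S.m_left_comm, S.m_comm]
    _ = S.o := by rw [S.m_pinv hp1, S.mu_sq, S.m_ol]

theorem compat_core (g : G) (x y : X) :
    S.a g x y = S.T (S.m (S.J (S.pg g)) x) (S.m (S.pg g) y) := by
  by_cases hgo : S.pg g = S.o
  · have hg1 : g = 1 := S.pg_eq_o hgo
    subst hg1
    rw [pg_one, S.J_o, S.m_zl, S.T_zl, S.m_ol, S.hone]
  by_cases hx : x = S.z
  · subst hx
    rw [S.m_zr, S.T_zl, S.m_pg]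
  · have hpz := S.pg_ne_z g
    have hJp : S.J (S.pg g) ≠ S.z := S.J_ne_z hgo
    have hs : S.m (S.J (S.pg g)) x ≠ S.z := S.m_ne hJp hx
    rw [S.I3 hx g y, S.BJ, S.T_def hs]
    rw [S.expand hpz hgo (S.J (S.m (S.pinv x) y)), S.JJ]
    have hIN : S.m S.mu (S.m (S.pinv (S.m (S.J (S.pg g)) x)) (S.m (S.pg g) y))
        = S.m (S.pinv (S.J (S.pinv (S.pg g)))) (S.m (S.pinv x) y) := by
      rw [S.coeff_id hpz hgo, S.pinv_hom]
      simp only [S.m_assoc, S.m_left_comm, S.m_comm]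
    rw [hIN, ← S.m_assoc, S.m_comm x (S.J (S.pg g))]

/-! ### Conclusion -/

theorem main : Nonempty (FieldActionModel G X S.a) := by
  letI F : Field X := S.field
  have hunit : ∀ g : G, S.m (S.pg g) (S.pg g⁻¹) = S.o := by
    intro g; rw [← S.pg_mul, mul_inv_cancel, pg_one]
  have hunit' : ∀ g : G, S.m (S.pg g⁻¹) (S.pg g) = S.o := by
    intro g; rw [← S.pg_mul, inv_mul_cancel, pg_one]
  have hvne : ∀ u : Xˣ, (u : X) ≠ S.z := fun u => Units.ne_zero u
  let e : G ≃* Xˣ :=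
    { toFun := fun g => ⟨S.pg g, S.pg g⁻¹, hunit g, hunit' g⟩
      invFun := fun u => S.lab (u : X)
      left_inv := fun g => S.lab_pg g
      right_inv := fun u => Units.ext (S.lab_spec (hvne u))
      map_mul' := fun g h => Units.ext (S.pg_mul g h) }
  refine ⟨{ fieldX := F, iso := e, compat := ?_ }⟩
  intro g x y
  show S.a g x y = (1 - S.pg g) * x + S.pg g * y
  have h1 : (1 : X) - S.pg g = S.J (S.pg g) := by
    rw [sub_eq_add_neg]
    show S.T S.o (S.m S.mu (S.pg g)) = _
    exact S.T_o_mu _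
  rw [h1]
  show S.a g x y = S.T (S.m (S.J (S.pg g)) x) (S.m (S.pg g) y)
  exact S.compat_core g x y

end Ctx
end
end SemitransField

/-- Every effective semitransitive distributive binary `G`-space with at least two points
carries a field structure with multiplicative group `G` realizing the action. -/
theorem semitransitive_distributive_field_structure (G X : Type*) [Group G]
    [Nontrivial X] (a : G → X → X → X) (ha : IsBinAct a) (he : IsEffectiveAct a)
    (hd : IsDistribAct a) (hs : IsSemitransAct a) :
    Nonempty (FieldActionModel G X a) := by
  classical
  obtain ⟨z, o, hzo⟩ := exists_pair_ne X
  by_cases h2 : ∃ w : X, w ≠ z ∧ w ≠ o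
  · obtain ⟨p0, hp1, hp2⟩ := h2
    exact SemitransField.Ctx.main
      { a := a, hmul := ha.1, hone := ha.2, heff := he, hdist := hd,
        hfx := hs.1, hrange := hs.2, z := z, o := o, hzo := hzo,
        p0 := p0, hp0z := hp1, hp0o := hp2 }
  · push_neg at h2
    have htot : ∀ w : X, w = z ∨ w = o := by
      intro w
      by_cases hw : w = z
      · exact Or.inl hw
      · exact Or.inr (h2 w hw)
    have hG : ∀ g : G, g = 1 := by
      intro g
      apply he
      have haz : a g z o = o := by
        have h3 : a g z o ≠ z := by
          intro hh
          have h4 := congrArg (a g⁻¹ z) hh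
          rw [← ha.1, inv_mul_cancel, ha.2, hs.1] at h4
          exact hzo h4.symm
        exact (htot _).resolve_left h3
      have stepA : ∀ w, a g z w = w := by
        intro w
        rcases htot w with hw | hw
        · rw [hw]; exact hs.1 g z
        · rw [hw]; exact haz
      intro u w
      rcases htot u with hu | hu
      · rw [hu]; exact stepA w
      · rw [hu]
        rcases htot w with hw | hw
        · rw [hw]
          have h5 : a g o z ≠ o := by
            intro hh
            have h7 := congrArg (a g⁻¹ o) hh
            rw [← ha.1, inv_mul_cancel, ha.2, hs.1] at h7
            exact hzo h7
          exact (htot _).resolve_right h5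
        · rw [hw]; exact hs.1 g o
    have hcases : ∀ n : ZMod 2, n = 0 ∨ n = 1 := by decide
    let e : X ≃ ZMod 2 :=
      { toFun := fun x => if x = z then 0 else 1
        invFun := fun n => if n = 0 then z else o
        left_inv := fun x => by
          rcases htot x with hx | hx <;> subst hx <;>
            simp [Ne.symm hzo, (by decide : (1 : ZMod 2) ≠ 0)]
        right_inv := fun n => by
          rcases hcases n with hn | hn <;> subst hn <;>
            simp [Ne.symm hzo, (by decide : (1 : ZMod 2) ≠ 0)] }
    letI F : Field X := e.field
    have h0 : (0 : X) = z := by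
      show e.symm (0 : ZMod 2) = z
      simp [e]
    have h1 : (1 : X) = o := by
      show e.symm (1 : ZMod 2) = o
      simp only [e, Equiv.coe_fn_symm_mk]
      rw [if_neg (by decide : (1 : ZMod 2) ≠ 0)]
    have hu : ∀ u : Xˣ, (u : X) = 1 := by
      intro u
      rcases htot (u : X) with h | h
      · exact absurd (by rw [h, ← h0] : (u : X) = 0) (Units.ne_zero u)
      · rw [h, h1]
    let iso : G ≃* Xˣ :=
      { toFun := fun _ => 1
        invFun := fun _ => 1
        left_inv := fun g => (hG g).symm
        right_inv := fun u => Units.ext (by rw [Units.val_one, hu u])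
        map_mul' := fun g h => by rw [mul_one] }
    refine ⟨{ fieldX := F, iso := iso, compat := ?_ }⟩
    intro g x y
    show a g x y = (1 - ((1 : Xˣ) : X)) * x + ((1 : Xˣ) : X) * y
    rw [hG g, ha.2, Units.val_one, sub_self, zero_mul, one_mul, zero_add]
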